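/- Let S̃ be a finite ground set, g : 2^S̃ → ℝ a set function with strictly positive marginal gains (g(S ∪ {i}) > g(S) for all S ⊆ S̃ and i ∈ S̃ \ S), D̂ : S̃ → ℝ strictly positive costs, and θ ∈ ℝ a threshold with g(S̃) ≥ θ. If client α ∈ S̃ belongs to the output of the vanilla greedy incentive search (Algorithm 3) run on S̃ with costs D̂, then for every cost profile D̂' that agrees with D̂ on S̃ \ {α} and satisfies 0 < D̂'(α) ≤ D̂(α), α also belongs to the output of Algorithm 3 run on S̃ with costs D̂'. (Monotonicity of the vanilla greedy incentive search.) -/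

import Mathlib

open Finset

variable {ι : Type*}

/-- The marginal-gain-to-cost ratio `(g(S ∪ {u}) − g(S)) / D̂(u)`. -/
noncomputable def marginalRatio [LinearOrder ι] (g : Finset ι → ℝ) (D : ι → ℝ)
    (S : Finset ι) (u : ι) : ℝ :=
  (g (insert u S) - g S) / D u

/-- The while-loop of the vanilla greedy incentive search (Algorithm 3), with fuel:
while `g(S) < θ`, add to `S` the element of `C \ S` with the largest
marginal-gain-to-cost ratio (ties broken by the linear order on `ι`), recording the
selected elements in order. -/
noncomputable def vanillaAux [LinearOrder ι] (g : Finset ι → ℝ) (D : ι → ℝ)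
    (C : Finset ι) (θ : ℝ) : ℕ → Finset ι → List ι
  | 0, _ => []
  | n + 1, S =>
    if θ ≤ g S then []
    else
      let T := C \ S
      let T' := T.filter fun u => ∀ v ∈ T, marginalRatio g D S v ≤ marginalRatio g D S u
      if h : T'.Nonempty then T'.min' h :: vanillaAux g D C θ n (insert (T'.min' h) S)
      else []

/-- The sequence of elements selected by the vanilla greedy incentive search
(Algorithm 3) on the candidate set `C` with threshold `θ`, in selection order. -/
noncomputable def vanillaSeq [LinearOrder ι] (g : Finset ι → ℝ) (D : ι → ℝ)
    (C : Finset ι) (θ : ℝ) : List ι :=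
  vanillaAux g D C θ (C.card + 1) ∅

/-- The output set of the vanilla greedy incentive search (Algorithm 3). -/
noncomputable def vanillaSearch [LinearOrder ι] (g : Finset ι → ℝ) (D : ι → ℝ)
    (C : Finset ι) (θ : ℝ) : Finset ι :=
  (vanillaSeq g D C θ).toFinset

lemma vanillaAux_mem_mono [LinearOrder ι] (Stilde : Finset ι) (g : Finset ι → ℝ)
    (hg_strict : ∀ S : Finset ι, S ⊆ Stilde → ∀ i ∈ Stilde, i ∉ S → g S < g (insert i S))
    (D D' : ι → ℝ) (hD : ∀ i ∈ Stilde, 0 < D i) (hD' : ∀ i ∈ Stilde, 0 < D' i)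
    (θ : ℝ) (α : ι) (hα : α ∈ Stilde)
    (hagree : ∀ i ∈ Stilde, i ≠ α → D' i = D i) (hle : D' α ≤ D α) :
    ∀ n (S : Finset ι), S ⊆ Stilde → α ∉ S →
      α ∈ vanillaAux g D Stilde θ n S → α ∈ vanillaAux g D' Stilde θ n S := by
  intro n
  induction n with
  | zero => intro S _ _ h; simp [vanillaAux] at h
  | succ n ih =>
    intro S hS hαS h
    rw [vanillaAux] at h ⊢
    by_cases hθS : θ ≤ g S
    · simp [hθS] at h
    simp only [if_neg hθS] at h ⊢
    set T : Finset ι := Stilde \ S with hTdef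
    have hαT : α ∈ T := Finset.mem_sdiff.mpr ⟨hα, hαS⟩
    set M : Finset ι :=
      T.filter fun u => ∀ v ∈ T, marginalRatio g D S v ≤ marginalRatio g D S u with hMdef
    set M' : Finset ι :=
      T.filter fun u => ∀ v ∈ T, marginalRatio g D' S v ≤ marginalRatio g D' S u with hM'def
    -- ratio facts
    have hq : ∀ u ∈ T, u ≠ α → marginalRatio g D' S u = marginalRatio g D S u := by
      intro u hu hu'
      have : u ∈ Stilde := (Finset.mem_sdiff.mp hu).1
      unfold marginalRatio
      rw [hagree u this hu']
    have hrα : marginalRatio g D S α ≤ marginalRatio g D' S α := by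
      have hnum : (0:ℝ) ≤ g (insert α S) - g S :=
        le_of_lt (sub_pos.mpr (hg_strict S hS α hα hαS))
      exact div_le_div_of_nonneg_left hnum (hD' α hα) hle
    -- the D-run filter set is nonempty (else h : α ∈ [])
    by_cases hM : M.Nonempty
    swap
    · rw [dif_neg hM] at h; simp at h
    rw [dif_pos hM] at h
    set β : ι := M.min' hM with hβdef
    have hβM : β ∈ M := Finset.min'_mem M hM
    obtain ⟨hβT, hβmax⟩ := Finset.mem_filter.mp hβM
    -- M' is nonempty
    obtain ⟨b, hb, hbmax⟩ := T.exists_max_image (marginalRatio g D' S) ⟨α, hαT⟩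
    have hM' : M'.Nonempty := ⟨b, Finset.mem_filter.mpr ⟨hb, hbmax⟩⟩
    rw [dif_pos hM']
    set γ : ι := M'.min' hM' with hγdef
    have hγM' : γ ∈ M' := Finset.min'_mem M' hM'
    obtain ⟨hγT, hγmax⟩ := Finset.mem_filter.mp hγM'
    by_cases hαβ : α = β
    · -- α ∈ M', and γ = α
      have hαM' : α ∈ M' := by
        refine Finset.mem_filter.mpr ⟨hαT, fun v hv => ?_⟩
        by_cases hv' : v = α
        · subst hv'; exact le_rfl
        · calc marginalRatio g D' S v = marginalRatio g D S v := hq v hv hv'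
            _ ≤ marginalRatio g D S β := hβmax v hv
            _ = marginalRatio g D S α := by rw [hαβ]
            _ ≤ marginalRatio g D' S α := hrα
      have h1 : γ ≤ α := Finset.min'_le M' α hαM'
      have h2 : α ≤ γ := by
        by_cases hγα : γ = α
        · exact le_of_eq hγα.symm
        · have hrγ : marginalRatio g D S γ = marginalRatio g D' S γ := (hq γ hγT hγα).symm
          have hγM : γ ∈ M := by
            refine Finset.mem_filter.mpr ⟨hγT, fun v hv => ?_⟩
            by_cases hv' : v = α
            · subst hv'
              calc marginalRatio g D S v ≤ marginalRatio g D' S v := hrα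
                _ ≤ marginalRatio g D' S γ := hγmax v hv
                _ = marginalRatio g D S γ := hrγ.symm
            · calc marginalRatio g D S v = marginalRatio g D' S v := (hq v hv hv').symm
                _ ≤ marginalRatio g D' S γ := hγmax v hv
                _ = marginalRatio g D S γ := hrγ.symm
          rw [hαβ]
          exact Finset.min'_le M γ hγM
      have : γ = α := le_antisymm h1 h2
      rw [this]
      exact List.mem_cons_self
    · -- α ≠ β; then α ∈ rest of the D-run list
      have hrest : α ∈ vanillaAux g D Stilde θ n (insert β S) := by
        rcases List.mem_cons.mp h with h' | h'
        · exact absurd h' hαβ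
        · exact h'
      by_cases hγα : γ = α
      · rw [hγα]; exact List.mem_cons_self
      · -- γ = β
        have hrγ : marginalRatio g D S γ = marginalRatio g D' S γ := (hq γ hγT hγα).symm
        have hγM : γ ∈ M := by
          refine Finset.mem_filter.mpr ⟨hγT, fun v hv => ?_⟩
          by_cases hv' : v = α
          · subst hv'
            calc marginalRatio g D S v ≤ marginalRatio g D' S v := hrα
              _ ≤ marginalRatio g D' S γ := hγmax v hv
              _ = marginalRatio g D S γ := hrγ.symm
          · calc marginalRatio g D S v = marginalRatio g D' S v := (hq v hv hv').symm
              _ ≤ marginalRatio g D' S γ := hγmax v hv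
              _ = marginalRatio g D S γ := hrγ.symm
        have hβγ : β ≤ γ := Finset.min'_le M γ hγM
        have hrγβ : marginalRatio g D S γ = marginalRatio g D S β :=
          le_antisymm (hβmax γ hγT) ((Finset.mem_filter.mp hγM).2 β hβT)
        have hβM' : β ∈ M' := by
          refine Finset.mem_filter.mpr ⟨hβT, fun v hv => ?_⟩
          have hrβ : marginalRatio g D' S β = marginalRatio g D S β :=
            hq β hβT (fun e => hαβ e.symm)
          by_cases hv' : v = α
          · subst hv'
            calc marginalRatio g D' S v ≤ marginalRatio g D' S γ := hγmax v hv
              _ = marginalRatio g D S γ := hrγ.symm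
              _ = marginalRatio g D S β := hrγβ
              _ = marginalRatio g D' S β := hrβ.symm
          · calc marginalRatio g D' S v = marginalRatio g D S v := hq v hv hv'
              _ ≤ marginalRatio g D S β := hβmax v hv
              _ = marginalRatio g D' S β := hrβ.symm
        have hγβ : γ ≤ β := Finset.min'_le M' β hβM'
        have hγeq : γ = β := le_antisymm hγβ hβγ
        rw [hγeq]
        refine List.mem_cons.mpr (Or.inr ?_)
        have hβStilde : β ∈ Stilde := (Finset.mem_sdiff.mp hβT).1
        have hins : insert β S ⊆ Stilde := Finset.insert_subset hβStilde hS
        have hαins : α ∉ insert β S := by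
          simp only [Finset.mem_insert, not_or]
          exact ⟨hαβ, hαS⟩
        exact ih (insert β S) hins hαins hrest

/-- Monotonicity of the vanilla greedy incentive search (Algorithm 3): if client `α` is
selected when it reports `D̂(α)`, it remains selected when it reports any smaller
positive cost, all other reports being unchanged. -/
theorem vanillaSearch_monotone [LinearOrder ι] (Stilde : Finset ι) (g : Finset ι → ℝ)
    (hg_strict : ∀ S : Finset ι, S ⊆ Stilde → ∀ i ∈ Stilde, i ∉ S → g S < g (insert i S))
    (D D' : ι → ℝ) (hD : ∀ i ∈ Stilde, 0 < D i) (hD' : ∀ i ∈ Stilde, 0 < D' i)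
    (θ : ℝ) (hθ : θ ≤ g Stilde)
    (α : ι) (hα : α ∈ Stilde)
    (hagree : ∀ i ∈ Stilde, i ≠ α → D' i = D i) (hle : D' α ≤ D α)
    (hmem : α ∈ vanillaSearch g D Stilde θ) :
    α ∈ vanillaSearch g D' Stilde θ := by
  unfold vanillaSearch vanillaSeq at hmem ⊢
  rw [List.mem_toFinset] at hmem ⊢
  exact vanillaAux_mem_mono Stilde g hg_strict D D' hD hD' θ α hα hagree hle
    (Stilde.card + 1) ∅ (Finset.empty_subset _) (Finset.notMem_empty α) hmem
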